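/- For the pulsone basis and any 0 ≤ k₁,k₂ ≤ M-1, Σ_{n=0}^{MN-1} p_{(k₀,l₀)}[n-k₂] conj(p_{(k₀,l₀)}[n-k₁]) = δ[k₁-k₂], independent of (k₀,l₀). Hence the pulsone basis satisfies the non-fading condition. -/

import Mathlib

open Complex

/-- The discrete-time pulsone, in closed form on ℤ. -/
noncomputable def pulsone (M N k₀ l₀ : ℕ) (n : ℤ) : ℂ :=
  if n % (M : ℤ) = (k₀ : ℤ) then
    (1 / (Real.sqrt N : ℂ)) *
      Complex.exp (2 * Real.pi * Complex.I * (((n - (k₀ : ℤ)) / (M : ℤ) : ℤ) : ℂ) * l₀ / N)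
  else 0

lemma count_mod (M r : ℕ) (hr : r < M) (N : ℕ) :
    ((Finset.range (M * N)).filter (fun n => n % M = r)).card = N := by
  induction N with
  | zero => simp
  | succ N ih =>
    rw [Nat.mul_succ, Finset.range_add, Finset.filter_union,
      Finset.card_union_of_disjoint, ih, Finset.filter_map]
    · have h1 : (Finset.range M).filter ((fun n => n % M = r) ∘ ⇑(addLeftEmbedding (M * N)))
          = {r} := by
        ext i
        simp only [Finset.mem_filter, Finset.mem_range, Finset.mem_singleton, Function.comp,
          addLeftEmbedding_apply]
        constructor
        · rintro ⟨hi, h⟩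
          rwa [Nat.mul_add_mod, Nat.mod_eq_of_lt hi] at h
        · rintro rfl
          exact ⟨hr, by rw [Nat.mul_add_mod, Nat.mod_eq_of_lt hr]⟩
      rw [h1]; simp
    · refine Finset.disjoint_left.mpr ?_
      rintro a ha hb
      simp only [Finset.mem_filter, Finset.mem_range, Finset.mem_map,
        addLeftEmbedding_apply] at ha hb
      obtain ⟨⟨b, hb1, rfl⟩, -⟩ := hb
      omega

lemma cond_iff (M k₀ k₂ n : ℕ) (hk₀ : k₀ < M) :
    ((n : ℤ) - k₂) % (M : ℤ) = (k₀ : ℤ) ↔ n % M = (k₀ + k₂) % M := by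
  have h0 : (k₀ : ℤ) % (M : ℤ) = k₀ :=
    Int.emod_eq_of_lt (Int.ofNat_nonneg _) (by exact_mod_cast hk₀)
  constructor
  · intro h
    have hm : ((n : ℤ) - k₂) ≡ k₀ [ZMOD (M : ℤ)] := by unfold Int.ModEq; rw [h, h0]
    have h2 := hm.add_right (k₂ : ℤ)
    rw [sub_add_cancel] at h2
    have h3 : (n : ℤ) % M = ((k₀ : ℤ) + k₂) % M := h2
    exact_mod_cast h3
  · intro h
    have h2 : (n : ℤ) % M = ((k₀ + k₂ : ℕ) : ℤ) % M := by exact_mod_cast h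
    push_cast at h2
    have hm : (n : ℤ) ≡ (k₀ : ℤ) + k₂ [ZMOD (M : ℤ)] := h2
    have h3 := hm.sub_right (k₂ : ℤ)
    have h4 : ((n : ℤ) - k₂) % M = ((k₀ : ℤ) + k₂ - k₂) % M := h3
    rw [add_sub_cancel_right, h0] at h4
    exact h4

lemma pulsone_normSq (M N k₀ l₀ : ℕ) (n : ℤ) (h : n % (M : ℤ) = (k₀ : ℤ)) :
    Complex.normSq (pulsone M N k₀ l₀ n) = (N : ℝ)⁻¹ := by
  rw [pulsone, if_pos h]
  set d : ℤ := (n - (k₀ : ℤ)) / (M : ℤ)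
  have hz : 2 * (Real.pi : ℂ) * Complex.I * ((d : ℤ) : ℂ) * (l₀ : ℕ) / (N : ℕ) =
      ((2 * Real.pi * (d : ℝ) * l₀ / N : ℝ) : ℂ) * Complex.I := by push_cast; ring
  rw [map_mul, hz]
  have h1 : Complex.normSq
      (Complex.exp (((2 * Real.pi * (d : ℝ) * l₀ / N : ℝ) : ℂ) * Complex.I)) = 1 := by
    rw [Complex.normSq_eq_norm_sq, Complex.norm_exp_ofReal_mul_I]; norm_num
  rw [h1, mul_one]
  rw [show (1 / (Real.sqrt N : ℂ)) = ((1 / Real.sqrt N : ℝ) : ℂ) by push_cast; ring]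
  rw [Complex.normSq_ofReal]
  rw [div_mul_div_comm, one_mul, Real.mul_self_sqrt (Nat.cast_nonneg N), one_div]

theorem pulsone_non_fading (M N : ℕ) (hM : 0 < M) (hN : 0 < N)
    (k₀ l₀ : ℕ) (hk₀ : k₀ ≤ M - 1) (hl₀ : l₀ ≤ N - 1)
    (k₁ k₂ : ℕ) (hk₁ : k₁ ≤ M - 1) (hk₂ : k₂ ≤ M - 1) :
    ∑ n ∈ Finset.range (M * N),
        pulsone M N k₀ l₀ ((n : ℤ) - (k₂ : ℤ)) *
          starRingEnd ℂ (pulsone M N k₀ l₀ ((n : ℤ) - (k₁ : ℤ))) =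
      if k₁ = k₂ then 1 else 0 := by
  have hk₀' : k₀ < M := by omega
  have hk₁' : k₁ < M := by omega
  have hk₂' : k₂ < M := by omega
  by_cases hk : k₁ = k₂
  · subst hk
    rw [if_pos rfl]
    have hterm : ∀ n ∈ Finset.range (M * N),
        pulsone M N k₀ l₀ ((n : ℤ) - (k₁ : ℤ)) *
          starRingEnd ℂ (pulsone M N k₀ l₀ ((n : ℤ) - (k₁ : ℤ))) =
        if n % M = (k₀ + k₁) % M then ((N : ℂ))⁻¹ else 0 := by
      intro n _
      rw [Complex.mul_conj]
      by_cases h : ((n : ℤ) - k₁) % (M : ℤ) = (k₀ : ℤ)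
      · rw [if_pos ((cond_iff M k₀ k₁ n hk₀').mp h), pulsone_normSq M N k₀ l₀ _ h]
        push_cast
        ring
      · rw [if_neg (fun hc => h ((cond_iff M k₀ k₁ n hk₀').mpr hc))]
        rw [pulsone, if_neg h]
        simp
    rw [Finset.sum_congr rfl hterm, ← Finset.sum_filter,
      Finset.sum_const, count_mod M _ (Nat.mod_lt _ hM) N, nsmul_eq_mul]
    exact mul_inv_cancel₀ (Nat.cast_ne_zero.mpr hN.ne')
  · rw [if_neg hk]
    refine Finset.sum_eq_zero fun n _ => ?_
    by_cases h2 : ((n : ℤ) - k₂) % (M : ℤ) = (k₀ : ℤ)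
    · by_cases h1 : ((n : ℤ) - k₁) % (M : ℤ) = (k₀ : ℤ)
      · exfalso
        have e1 := (cond_iff M k₀ k₁ n hk₀').mp h1
        have e2 := (cond_iff M k₀ k₂ n hk₀').mp h2
        have e3 : (k₀ + k₁) % M = (k₀ + k₂) % M := by omega
        have e4 : k₁ % M = k₂ % M := Nat.ModEq.add_left_cancel' k₀ e3
        rw [Nat.mod_eq_of_lt hk₁', Nat.mod_eq_of_lt hk₂'] at e4
        exact hk e4
      · rw [show pulsone M N k₀ l₀ ((n : ℤ) - k₁) = 0 from by rw [pulsone, if_neg h1]]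
        simp
    · rw [show pulsone M N k₀ l₀ ((n : ℤ) - k₂) = 0 from by rw [pulsone, if_neg h2]]
      simp
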